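/- Let θ_q ∈ (0, 2π) and m > 0. If a₀, b₀ ∈ ℝ and the sequence ψ_k := (k² + m²)^{-1/4}(a₀ + e^{ikθ_q} b₀), k ∈ ℤ, belongs to ℓ²(ℤ), then a₀ = b₀ = 0. -/

import Mathlib

open Complex

private lemma char_seq_norm_id (θq m : ℝ) (a₀ b₀ : ℝ) (k : ℤ) (hm : 0 < m) :
    ‖((((k : ℝ) ^ 2 + m ^ 2) ^ (-(1 / 4 : ℝ)) : ℝ) : ℂ) *
        (a₀ + Complex.exp (Complex.I * k * θq) * b₀)‖ ^ 2 =
    (Real.sqrt ((k:ℝ)^2 + m^2))⁻¹ * (a₀^2 + b₀^2 + 2*a₀*b₀*Real.cos (k*θq)) := by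
  have hx : (0:ℝ) < (k:ℝ)^2 + m^2 := by positivity
  have hexp : Complex.exp (Complex.I * k * θq)
      = (Real.cos (k*θq) : ℝ) + (Real.sin (k*θq) : ℝ) * Complex.I := by
    rw [show (Complex.I * k * θq : ℂ) = ((k*θq : ℝ):ℂ) * Complex.I by push_cast; ring,
       Complex.exp_mul_I, Complex.ofReal_cos, Complex.ofReal_sin]
  rw [norm_mul, mul_pow, hexp]
  have h1 : ‖((((k : ℝ) ^ 2 + m ^ 2) ^ (-(1 / 4 : ℝ)) : ℝ) : ℂ)‖ ^ 2
      = (Real.sqrt ((k:ℝ)^2 + m^2))⁻¹ := by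
    rw [Complex.norm_real, Real.norm_eq_abs, _root_.abs_of_nonneg (Real.rpow_nonneg hx.le _),
      ← Real.rpow_natCast (((k : ℝ) ^ 2 + m ^ 2) ^ (-(1 / 4 : ℝ))) 2,
      ← Real.rpow_mul hx.le]
    norm_num
    rw [Real.rpow_neg hx.le, Real.sqrt_eq_rpow]
  rw [h1]
  congr 1
  have : (↑a₀ + (↑(Real.cos (k*θq)) + ↑(Real.sin (k*θq)) * Complex.I) * ↑b₀ : ℂ)
      = Complex.mk (a₀ + Real.cos (k*θq) * b₀) (Real.sin (k*θq) * b₀) := by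
    apply Complex.ext <;> simp [← Complex.ofReal_mul, Complex.cos_ofReal_re, Complex.sin_ofReal_re]
  rw [this]
  rw [Complex.sq_norm, Complex.normSq_mk]
  nlinarith [Real.sin_sq_add_cos_sq (k*θq)]

private lemma char_seq_w_ne_one (θq : ℝ) (hθ : θq ∈ Set.Ioo 0 (2 * Real.pi)) :
    Complex.exp ((θq : ℂ) * Complex.I) ≠ 1 := by
  rw [Ne, Complex.exp_eq_one_iff]
  push_neg
  intro n hn
  have h2 : ((θq : ℝ) : ℂ) = ((n * (2 * Real.pi) : ℝ) : ℂ) := by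
    have := mul_right_cancel₀ Complex.I_ne_zero
      (by push_cast; linear_combination hn :
        (θq : ℂ) * Complex.I = ((n * (2 * Real.pi) : ℝ) : ℂ) * Complex.I)
    exact this
  have h3 : θq = n * (2 * Real.pi) := by exact_mod_cast h2
  obtain ⟨h4, h5⟩ := hθ
  have hπ := Real.pi_pos
  rcases le_or_gt n 0 with hn0 | hn0
  · have : (n : ℝ) ≤ 0 := by exact_mod_cast hn0
    nlinarith
  · have : (1 : ℝ) ≤ (n : ℝ) := by exact_mod_cast hn0
    nlinarith

private lemma char_seq_cos_sum_bdd (θq : ℝ) (hθ : θq ∈ Set.Ioo 0 (2 * Real.pi)) :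
    ∀ n, ‖∑ i ∈ Finset.range n, Real.cos (i * θq)‖
      ≤ 2 / ‖Complex.exp ((θq : ℂ) * Complex.I) - 1‖ := by
  intro n
  set w : ℂ := Complex.exp ((θq : ℂ) * Complex.I) with hw
  have hw1 : w ≠ 1 := char_seq_w_ne_one θq hθ
  have hwpow : ∀ i : ℕ, w ^ i = Complex.exp (((i * θq : ℝ) : ℂ) * Complex.I) := by
    intro i
    rw [hw, ← Complex.exp_nat_mul]
    push_cast
    ring_nf
  have hsum : ∑ i ∈ Finset.range n, Real.cos (i * θq)
      = (∑ i ∈ Finset.range n, w ^ i).re := by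
    rw [Complex.re_sum]
    refine Finset.sum_congr rfl fun i _ => ?_
    rw [hwpow i, Complex.exp_ofReal_mul_I_re]
  rw [hsum, Real.norm_eq_abs]
  calc |(∑ i ∈ Finset.range n, w ^ i).re| ≤ ‖∑ i ∈ Finset.range n, w ^ i‖ :=
        Complex.abs_re_le_norm _
    _ = ‖(w ^ n - 1) / (w - 1)‖ := by rw [geom_sum_eq hw1]
    _ ≤ 2 / ‖w - 1‖ := by
        rw [norm_div]
        have hwn : ‖w ^ n - 1‖ ≤ 2 := by
          calc ‖w ^ n - 1‖ ≤ ‖w ^ n‖ + ‖(1:ℂ)‖ := norm_sub_le _ _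
            _ = 2 := by
                rw [hwpow n, Complex.norm_exp_ofReal_mul_I]
                norm_num
        have : (0:ℝ) < ‖w - 1‖ := by
          rw [norm_pos_iff, sub_ne_zero]; exact hw1
        gcongr

open Filter in
private lemma char_seq_main (θq m : ℝ) (hθ : θq ∈ Set.Ioo 0 (2 * Real.pi)) (hm : 0 < m)
    (a₀ b₀ : ℝ)
    (hC : 0 < a₀^2 + b₀^2)
    (hsum : Summable fun n : ℕ =>
      (Real.sqrt ((n:ℝ)^2 + m^2))⁻¹ *
        (a₀^2 + b₀^2 + 2*a₀*b₀*Real.cos (n*θq))) : False := by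
  set C := a₀^2 + b₀^2 with hCdef
  set D := 2*a₀*b₀ with hDdef
  set c : ℕ → ℝ := fun n => (Real.sqrt ((n:ℝ)^2 + m^2))⁻¹ with hc
  have hanti : Antitone c := by
    intro a b hab
    have h0 : (0:ℝ) < Real.sqrt ((a:ℝ)^2 + m^2) := Real.sqrt_pos.2 (by positivity)
    apply inv_anti₀ h0
    apply Real.sqrt_le_sqrt
    have : (a:ℝ) ≤ b := by exact_mod_cast hab
    nlinarith [Nat.cast_nonneg (α := ℝ) a]
  have h0 : Tendsto c atTop (nhds 0) := by
    apply Filter.Tendsto.inv_tendsto_atTop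
    apply tendsto_atTop_mono (fun n : ℕ => ?_) tendsto_natCast_atTop_atTop
    calc (n:ℝ) = Real.sqrt ((n:ℝ)^2) := (Real.sqrt_sq (Nat.cast_nonneg n)).symm
      _ ≤ _ := Real.sqrt_le_sqrt (by nlinarith)
  have hU : CauchySeq fun n => ∑ i ∈ Finset.range n, c i • Real.cos (i * θq) :=
    hanti.cauchySeq_series_mul_of_tendsto_zero_of_bounded h0 (char_seq_cos_sum_bdd θq hθ)
  have hT : CauchySeq fun n => ∑ i ∈ Finset.range n,
      c i * (C + D * Real.cos (i * θq)) :=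
    hsum.hasSum.tendsto_sum_nat.cauchySeq
  have hU' : CauchySeq fun n => D * ∑ i ∈ Finset.range n, c i • Real.cos (i * θq) :=
    Real.uniformContinuous_const_mul.comp_cauchySeq hU
  have hS : CauchySeq fun n => ∑ i ∈ Finset.range n, c i := by
    have h1 : CauchySeq fun n => C⁻¹ * ((∑ i ∈ Finset.range n,
        c i * (C + D * Real.cos (i * θq))) +
        -(D * ∑ i ∈ Finset.range n, c i • Real.cos (i * θq))) :=
      Real.uniformContinuous_const_mul.comp_cauchySeq (hT.add hU'.neg)
    convert h1 using 2 with n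
    rw [Finset.mul_sum, ← Finset.sum_neg_distrib, ← Finset.sum_add_distrib,
      Finset.mul_sum]
    refine Finset.sum_congr rfl fun i _ => ?_
    simp only [smul_eq_mul]
    field_simp
    ring
  obtain ⟨L, hL⟩ := cauchySeq_tendsto_of_complete hS
  have hmono : Monotone fun n => ∑ i ∈ Finset.range n, c i := by
    intro a b hab
    exact Finset.sum_le_sum_of_subset_of_nonneg (Finset.range_subset_range.2 hab)
      (fun i _ _ => by positivity)
  have hbd : ∀ n, ∑ i ∈ Finset.range n, c i ≤ L :=
    fun n => hmono.ge_of_tendsto hL n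
  have hsc : Summable c := summable_of_sum_range_le (fun n => by positivity) hbd
  have hcomp : Summable (fun n : ℕ => ((1+m) * ((n:ℝ)+1))⁻¹) := by
    refine hsc.of_nonneg_of_le (fun n => by positivity) (fun n => ?_)
    have h1 : Real.sqrt ((n:ℝ)^2 + m^2) ≤ (1+m) * ((n:ℝ)+1) := by
      rw [show ((1+m) * ((n:ℝ)+1)) = Real.sqrt (((1+m)*((n:ℝ)+1))^2) by
        rw [Real.sqrt_sq (by positivity)]]
      apply Real.sqrt_le_sqrt
      nlinarith [Nat.cast_nonneg (α := ℝ) n]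
    have h2 : (0:ℝ) < Real.sqrt ((n:ℝ)^2 + m^2) := Real.sqrt_pos.2 (by positivity)
    exact inv_anti₀ h2 h1
  have h3 : Summable (fun n : ℕ => ((n:ℝ)+1)⁻¹) := by
    have := hcomp.mul_left (1+m)
    simp only [mul_inv] at this
    convert this using 2 with n
    · rfl
    · rw [← mul_assoc, mul_inv_cancel₀ (by linarith : (0:ℝ) < 1+m).ne', one_mul]
  have h4 : Summable (fun n : ℕ => ((n:ℝ))⁻¹) := by
    rw [← summable_nat_add_iff 1]
    convert h3 using 2 with n
    · rfl
    · simp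
  exact Real.not_summable_natCast_inv h4

/-- If `θ_q ∈ (0, 2π)`, `m > 0` and the sequence
`ψ_k = (k² + m²)^(-1/4) (a₀ + e^{i k θ_q} b₀)`, `k ∈ ℤ`, is square-summable,
then `a₀ = b₀ = 0`. -/
theorem char_sequence_not_l2 (θq m : ℝ) (hθ : θq ∈ Set.Ioo 0 (2 * Real.pi))
    (hm : 0 < m) (a₀ b₀ : ℝ)
    (ψ : ℤ → ℂ)
    (hψ : ∀ k : ℤ, ψ k =
      ((((k : ℝ) ^ 2 + m ^ 2) ^ (-(1 / 4 : ℝ)) : ℝ) : ℂ) *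
        (a₀ + Complex.exp (Complex.I * k * θq) * b₀))
    (hsum : Summable fun k : ℤ => ‖ψ k‖ ^ 2) :
    a₀ = 0 ∧ b₀ = 0 := by
  by_contra h
  have hC : 0 < a₀^2 + b₀^2 := by
    rcases not_and_or.mp h with h | h <;> positivity
  have hN : Summable fun n : ℕ =>
      (Real.sqrt ((n:ℝ)^2 + m^2))⁻¹ *
        (a₀^2 + b₀^2 + 2*a₀*b₀*Real.cos (n*θq)) := by
    have h1 : Summable fun n : ℕ => ‖ψ (n : ℤ)‖ ^ 2 :=
      hsum.comp_injective Nat.cast_injective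
    refine h1.congr fun n => ?_
    rw [hψ (n : ℤ), char_seq_norm_id θq m a₀ b₀ (n : ℤ) hm]
    push_cast
    ring
  exact absurd (char_seq_main θq m hθ hm a₀ b₀ hC hN) id
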